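/- Let I ⊆ {0,…,m} be nonempty and satisfy: 1 ∈ I implies 0 ∈ I, and m−1 ∈ I implies m ∈ I. Let w ∈ W̃_{D_m}, let x ∈ W_{I,D_m}, and let k ∈ I. Then w satisfies (SP1') at k if and only if xw satisfies (SP1') at k, and similarly for (SP2') and for (SP3'). In particular, w satisfies (SP1'), (SP2'), (SP3') at every k ∈ I if and only if xw does. -/

import Mathlib

open Finset

namespace TypeD

abbrev VecZ (m : ℕ) := Fin (2 * m) → ℤ
abbrev VecR (m : ℕ) := Fin (2 * m) → ℝ

/-- `σ ∈ S_{2m}^∘`: even, and commuting with `j ↦ j*`. -/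
def InSO (m : ℕ) (σ : Equiv.Perm (Fin (2 * m))) : Prop :=
  Equiv.Perm.sign σ = 1 ∧ ∀ j, σ j.rev = (σ j).rev

/-- `t ∈ X_{*D_m}`. -/
def InXD (m : ℕ) (t : VecZ m) : Prop :=
  ∀ j j' : Fin (2 * m), t j + t j.rev = t j' + t j'.rev

/-- `ω_i ∈ ℤ^{2m}`: writing `i = 2m·b + c` with `0 ≤ c < 2m`, the first `c` entries
are `-b-1` and the rest are `-b`. -/
def omegaD (m : ℕ) (i : ℤ) (j : Fin (2 * m)) : ℤ :=
  if ((j : ℕ) : ℤ) < i % (2 * (m : ℤ)) then -(i / (2 * (m : ℤ))) - 1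
  else -(i / (2 * (m : ℤ)))

/-- `μ_k^w = w·ω_k − ω_k` for `w = t_t σ`. -/
def muD (m : ℕ) (t : VecZ m) (σ : Equiv.Perm (Fin (2 * m))) (k : ℤ) (j : Fin (2 * m)) : ℤ :=
  t j + omegaD m k (σ⁻¹ j) - omegaD m k j

/-- `ν_k^w = (μ_k^w + μ_{−k}^w)/2`, real-valued. -/
noncomputable def nuD (m : ℕ) (t : VecZ m) (σ : Equiv.Perm (Fin (2 * m))) (k : ℤ) (j : Fin (2 * m)) : ℝ :=
  ((muD m t σ k j + muD m t σ (-k) j : ℤ) : ℝ) / 2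

/-- `c_k^w = #{j : μ_k^w(j) = 2}`. -/
noncomputable def cD (m : ℕ) (t : VecZ m) (σ : Equiv.Perm (Fin (2 * m))) (k : ℤ) : ℕ :=
  Set.ncard {j : Fin (2 * m) | muD m t σ k j = 2}

/-- the cocharacter `μ = (2^{(q)}, 1^{(2m−2q)}, 0^{(q)})`. -/
def muQ (m q : ℕ) (j : Fin (2 * m)) : ℤ :=
  if (j : ℕ) < q then 2 else if (j : ℕ) < 2 * m - q then 1 else 0

/-- the coroot lattice `Q∨_{D_m}`. -/
def QveeD (m : ℕ) : Set (VecZ m) :=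
  {x | (∀ j, x j + x j.rev = 0) ∧
    Even (∑ j ∈ Finset.univ.filter (fun j : Fin (2 * m) => (j : ℕ) < m), x j)}

/-- `j ∈ A_a` (1-indexed `{1,…,a} ∪ {2m+1−a,…,2m}`). -/
def memA (m a : ℕ) (j : Fin (2 * m)) : Prop := (j : ℕ) < a ∨ 2 * m - a ≤ (j : ℕ)

/-- `j ∈ B_a` (1-indexed `{a+1,…,2m−a}`). -/
def memB (m a : ℕ) (j : Fin (2 * m)) : Prop := a ≤ (j : ℕ) ∧ (j : ℕ) < 2 * m - a

def IsIntVal (x : ℝ) : Prop := ∃ z : ℤ, x = (z : ℝ)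

/-- a half-integer: an element of `(1/2)ℤ ∖ ℤ`. -/
def IsHalfInt (x : ℝ) : Prop := (∃ z : ℤ, x = (z : ℝ) / 2) ∧ ¬ IsIntVal x

/-- `μ_k^w` is self-dual, i.e. `μ_k^w = μ_{−k}^w`. -/
def SelfDual (m : ℕ) (t : VecZ m) (σ : Equiv.Perm (Fin (2 * m))) (k : ℤ) : Prop :=
  ∀ j, muD m t σ k j = muD m t σ (-k) j

/-- (SP1) at `k`. -/
def SP1 (m : ℕ) (t : VecZ m) (σ : Equiv.Perm (Fin (2 * m))) (k : ℤ) : Prop :=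
  (∀ j, muD m t σ k j + muD m t σ (-k) j.rev = 2) ∧
  (∀ j, 0 ≤ muD m t σ k j ∧ muD m t σ k j ≤ 2)

/-- (SP2) at `k`. -/
def SP2 (m q : ℕ) (t : VecZ m) (σ : Equiv.Perm (Fin (2 * m))) (k : ℤ) : Prop :=
  cD m t σ k ≤ q

/-- (SP3) at `k`. -/
def SP3 (m q : ℕ) (t : VecZ m) (σ : Equiv.Perm (Fin (2 * m))) (k : ℕ) : Prop :=
  (SelfDual m t σ (k : ℤ) ∧ (fun j => muD m t σ (k : ℤ) j - muQ m q j) ∉ QveeD m) →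
    ∃ j₁ j₂ : Fin (2 * m), memA m k j₁ ∧ memB m k j₂ ∧
      muD m t σ (k : ℤ) j₁ = 1 ∧ muD m t σ (k : ℤ) j₂ = 1

/-- (SP1') at `k`. -/
def SP1' (m : ℕ) (t : VecZ m) (σ : Equiv.Perm (Fin (2 * m))) (k : ℤ) : Prop :=
  (∀ j, nuD m t σ k j + nuD m t σ k j.rev = 2) ∧
  (∀ j, 0 ≤ nuD m t σ k j ∧ nuD m t σ k j ≤ 2)

/-- (SP2') at `k`. -/
def SP2' (m q : ℕ) (t : VecZ m) (σ : Equiv.Perm (Fin (2 * m))) (k : ℤ) : Prop :=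
  (Set.ncard {j : Fin (2 * m) | nuD m t σ k j = 2} : ℝ) +
    (Set.ncard {j : Fin (2 * m) | ¬ IsIntVal (nuD m t σ k j)} : ℝ) / 4 ≤ (q : ℝ)

/-- `ν_k^w − μ ∈ Q∨_{D_m}`. -/
def NuCongQvee (m q : ℕ) (t : VecZ m) (σ : Equiv.Perm (Fin (2 * m))) (k : ℤ) : Prop :=
  ∃ y ∈ QveeD m, ∀ j, nuD m t σ k j = ((muQ m q j + y j : ℤ) : ℝ)

/-- (SP3') at `k`. -/
def SP3' (m q : ℕ) (t : VecZ m) (σ : Equiv.Perm (Fin (2 * m))) (k : ℕ) : Prop :=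
  ((∀ j, IsIntVal (nuD m t σ (k : ℤ) j)) ∧ ¬ NuCongQvee m q t σ (k : ℤ)) →
    ∃ j₁ j₂ : Fin (2 * m), memA m k j₁ ∧ memB m k j₂ ∧
      nuD m t σ (k : ℤ) j₁ = 1 ∧ nuD m t σ (k : ℤ) j₂ = 1

/-- the orbit `S_{2m}^∘ · μ` inside `ℝ^{2m}`. -/
def OrbitMu (m q : ℕ) : Set (VecR m) :=
  {x | ∃ σ : Equiv.Perm (Fin (2 * m)), InSO m σ ∧ ∀ j, x j = ((muQ m q (σ⁻¹ j) : ℤ) : ℝ)}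

/-- `Conv(S_{2m}^∘ · μ)`. -/
def ConvMu (m q : ℕ) : Set (VecR m) := convexHull ℝ (OrbitMu m q)

/-- the affine action of `w = t_t σ` on `ℝ^{2m}`. -/
noncomputable def actR (m : ℕ) (t : VecZ m) (σ : Equiv.Perm (Fin (2 * m))) (x : VecR m) (j : Fin (2 * m)) : ℝ :=
  (t j : ℝ) + x (σ⁻¹ j)

/-- the point `a_k = ((−1/2)^{(k)}, 0^{(2m−2k)}, (1/2)^{(k)})`. -/
noncomputable def aD (m k : ℕ) (j : Fin (2 * m)) : ℝ :=
  if (j : ℕ) < k then -(1 / 2) else if (j : ℕ) < 2 * m - k then 0 else 1 / 2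

/-- the point `a_{0'} = (−1, 0^{(2m−2)}, 1)`. -/
noncomputable def a0' (m : ℕ) (j : Fin (2 * m)) : ℝ :=
  if (j : ℕ) = 0 then -1 else if (j : ℕ) = 2 * m - 1 then 1 else 0

/-- the point `a_{m'} = ((−1/2)^{(m−1)}, 1/2, −1/2, (1/2)^{(m−1)})`. -/
noncomputable def am' (m : ℕ) (j : Fin (2 * m)) : ℝ :=
  if (j : ℕ) < m - 1 then -(1 / 2)
  else if (j : ℕ) = m - 1 then 1 / 2
  else if (j : ℕ) = m then -(1 / 2)
  else 1 / 2

/-- `ν_{0'}^w = w·a_{0'} − a_{0'}`. -/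
noncomputable def nu0' (m : ℕ) (t : VecZ m) (σ : Equiv.Perm (Fin (2 * m))) (j : Fin (2 * m)) : ℝ :=
  actR m t σ (a0' m) j - a0' m j

/-- `ν_{m'}^w = w·a_{m'} − a_{m'}`. -/
noncomputable def num' (m : ℕ) (t : VecZ m) (σ : Equiv.Perm (Fin (2 * m))) (j : Fin (2 * m)) : ℝ :=
  actR m t σ (am' m) j - am' m j

/-- membership in the real apartment `{x : x(1)+x(2m) = ⋯ = x(m)+x(m+1)}`. -/
def InApartR (m : ℕ) (x : VecR m) : Prop :=
  ∀ j j' : Fin (2 * m), x j + x j.rev = x j' + x j'.rev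

/-- membership in the base alcove `A_{D_m}`. -/
def InAlcove (m : ℕ) (x : VecR m) : Prop :=
  InApartR m x ∧
  (∀ j0 jt : Fin (2 * m), (j0 : ℕ) = 0 → 1 ≤ (jt : ℕ) → (jt : ℕ) ≤ m →
    x j0 < x jt ∧ x j0.rev - 1 < x jt) ∧
  (∀ j j' : Fin (2 * m), 1 ≤ (j : ℕ) → (j : ℕ) ≤ m - 2 → (j : ℕ) < (j' : ℕ) →
    (j' : ℕ) ≤ m → x j < x j')

/-- `w = t_t σ` is μ-permissible: `w ≡ t_μ mod W_{aff}` (equivalently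
`ν_0^w − μ ∈ Q∨_{D_m}`) and `w·x − x ∈ Conv(S_{2m}^∘ μ)` for all `x` in the base alcove. -/
def MuPermissible (m q : ℕ) (t : VecZ m) (σ : Equiv.Perm (Fin (2 * m))) : Prop :=
  NuCongQvee m q t σ 0 ∧
  ∀ x : VecR m, InAlcove m x → (fun j => actR m t σ x j - x j) ∈ ConvMu m q

/-- the coroot `α∨_{i,j} = e_i − e_j + e_{j*} − e_{i*}`. -/
def corootD (m : ℕ) (i j l : Fin (2 * m)) : ℤ :=
  (if l = i then 1 else 0) - (if l = j then 1 else 0) +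
    (if l = j.rev then 1 else 0) - (if l = i.rev then 1 else 0)

/-- `(t', σ')` represents `s_{α̃_{i,j;d}} · w` for `w = t_t σ`: on the apartment it
acts by `x ↦ w·x − ⟨α̃_{i,j;d}, w·x⟩ α∨_{i,j}`. -/
def IsReflOf (m : ℕ) (i j : Fin (2 * m)) (d : ℤ) (t : VecZ m) (σ : Equiv.Perm (Fin (2 * m)))
    (t' : VecZ m) (σ' : Equiv.Perm (Fin (2 * m))) : Prop :=
  ∀ x : VecR m, InApartR m x → ∀ l,
    actR m t' σ' x l =
      actR m t σ x l - (actR m t σ x i - actR m t σ x j - (d : ℝ)) * (corootD m i j l : ℝ)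

/-- Membership of `i` in `2mℤ ± I`. -/
def FaceIdxD (m : ℕ) (I : Finset ℕ) (i : ℤ) : Prop :=
  ∃ a ∈ I, ∃ b : ℤ, i = 2 * (m : ℤ) * b + (a : ℤ) ∨ i = 2 * (m : ℤ) * b - (a : ℤ)

/-- `v` is a `d`-face of type `(2m, I)`. -/
structure IsFaceD (m : ℕ) (I : Finset ℕ) (d : ℤ) (v : ℤ → VecZ m) : Prop where
  per : ∀ i, FaceIdxD m I i → ∀ j, v (i + 2 * (m : ℤ)) j = v i j - 1
  mono : ∀ i i', FaceIdxD m I i → FaceIdxD m I i' → i ≤ i' → ∀ j, v i' j ≤ v i j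
  sumEq : ∀ i i', FaceIdxD m I i → FaceIdxD m I i' → (∑ j, v i j) - (∑ j, v i' j) = i' - i
  dual : ∀ i, FaceIdxD m I i → ∀ j, v i j + v (-i) j.rev = d

/-- `μ_i^v := v_i − ω_i` for a face `v`. -/
def muFaceD (m : ℕ) (v : ℤ → VecZ m) (i : ℤ) (j : Fin (2 * m)) : ℤ := v i j - omegaD m i j

/-- `ε` of a translation vector: the sum of the first `m` entries mod 2. -/
def epsVec (m : ℕ) (x : VecZ m) : ZMod 2 :=
  ((∑ j ∈ Finset.univ.filter (fun j : Fin (2 * m) => (j : ℕ) < m), x j : ℤ) : ZMod 2)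

/-- membership of `(v, γ)` in `F_{I,D_m}`. -/
def MemFD (m : ℕ) (I : Finset ℕ) (v : ℤ → VecZ m) (γ : ZMod 2) : Prop :=
  (∃ d, IsFaceD m I d v) ∧
  (if 0 ∈ I then
    if m ∈ I then
      (fun j => muFaceD m v 0 j - muFaceD m v (m : ℤ) j) ∈ QveeD m ∧
        γ = epsVec m (fun j => muFaceD m v 0 j)
    else γ = epsVec m (fun j => muFaceD m v 0 j)
  else if m ∈ I then γ = epsVec m (fun j => muFaceD m v (m : ℤ) j)
  else True)

/-- membership of `t_tx σx` in `W_{I,D_m}` (the group conditions on `(tx, σx)` being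
assumed separately): it lies in `W_{aff,D_m}` and fixes `a_k` for all `k ∈ I`. -/
def MemWI (m : ℕ) (I : Finset ℕ) (tx : VecZ m) (σx : Equiv.Perm (Fin (2 * m))) : Prop :=
  tx ∈ QveeD m ∧ ∀ k ∈ I, ∀ j, (tx j : ℝ) + aD m k (σx⁻¹ j) = aD m k j

/-- (SP1) at `k` for a face. -/
def SP1F (m : ℕ) (v : ℤ → VecZ m) (k : ℕ) : Prop :=
  (∀ j, muFaceD m v (k : ℤ) j + muFaceD m v (-(k : ℤ)) j.rev = 2) ∧
  (∀ j, 0 ≤ muFaceD m v (k : ℤ) j ∧ muFaceD m v (k : ℤ) j ≤ 2)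

/-- (SP2) at `k` for a face. -/
def SP2F (m q : ℕ) (v : ℤ → VecZ m) (k : ℕ) : Prop :=
  Set.ncard {j : Fin (2 * m) | muFaceD m v (k : ℤ) j = 2} ≤ q

/-- (SP3) at `k` for a face. -/
def SP3F (m q : ℕ) (v : ℤ → VecZ m) (k : ℕ) : Prop :=
  ((∀ j, muFaceD m v (k : ℤ) j = muFaceD m v (-(k : ℤ)) j) ∧
      (fun j => muFaceD m v (k : ℤ) j - muQ m q j) ∉ QveeD m) →
    ∃ j₁ j₂ : Fin (2 * m), memA m k j₁ ∧ memB m k j₂ ∧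
      muFaceD m v (k : ℤ) j₁ = 1 ∧ muFaceD m v (k : ℤ) j₂ = 1

/-- `(v, γ) ∈ F_{I,D_m}` is μ-spin-permissible. -/
def SpinPermF (m q : ℕ) (I : Finset ℕ) (v : ℤ → VecZ m) (γ : ZMod 2) : Prop :=
  γ = epsVec m (fun j => muQ m q j) ∧ ∀ k ∈ I, SP1F m v k ∧ SP2F m q v k ∧ SP3F m q v k

theorem Equiv.Perm.apply_inv_self {α : Type*} (f : Equiv.Perm α) (x : α) : f (f⁻¹ x) = x :=
  f.apply_symm_apply x

theorem Equiv.Perm.inv_apply_self {α : Type*} (f : Equiv.Perm α) (x : α) : f⁻¹ (f x) = x :=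
  f.symm_apply_apply x

lemma inv_rev {m : ℕ} (e : Equiv.Perm (Fin (2 * m))) (he : ∀ j, e j.rev = (e j).rev) :
    ∀ j, e⁻¹ j.rev = (e⁻¹ j).rev := by
  intro j
  apply e.injective
  rw [he, Equiv.Perm.apply_inv_self, Equiv.Perm.apply_inv_self]

lemma omegaA {m : ℕ} (hm : 1 ≤ m) {k : ℕ} (hk : k ≤ m) (j : Fin (2 * m)) :
    omegaD m (k : ℤ) j = if (j : ℕ) < k then -1 else 0 := by
  have e1 : (k : ℤ) % (2 * (m : ℤ)) = k := Int.emod_eq_of_lt (by positivity) (by omega)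
  have e2 : (k : ℤ) / (2 * (m : ℤ)) = 0 := Int.ediv_eq_zero_of_lt (by positivity) (by omega)
  simp only [omegaD, e1, e2]
  split_ifs <;> omega

lemma omegaB {m : ℕ} (hm : 1 ≤ m) {k : ℕ} (hk : k ≤ m) (j : Fin (2 * m)) :
    omegaD m (-(k : ℤ)) j = if (j : ℕ) < 2 * m - k then 0 else 1 := by
  have hj := j.isLt
  rcases Nat.eq_zero_or_pos k with rfl | hk0
  · simp only [Nat.cast_zero, neg_zero, omegaD, Int.zero_emod, Int.zero_ediv]
    split_ifs <;> omega
  · have e1 : (-(k : ℤ)) % (2 * (m : ℤ)) = 2 * (m : ℤ) - (k : ℤ) := by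
      rw [show (-(k : ℤ)) = (2 * (m : ℤ) - (k : ℤ)) + 2 * (m : ℤ) * (-1) by ring,
        Int.add_mul_emod_self_left, Int.emod_eq_of_lt (by omega) (by omega)]
    have hdm := Int.mul_ediv_add_emod (-(k : ℤ)) (2 * (m : ℤ))
    rw [e1] at hdm
    have e2 : (-(k : ℤ)) / (2 * (m : ℤ)) = -1 := by
      have h3 : 2 * (m : ℤ) * ((-(k : ℤ)) / (2 * (m : ℤ))) = 2 * (m : ℤ) * (-1) := by linarith
      exact mul_left_cancel₀ (by omega) h3
    simp only [omegaD, e1, e2]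
    split_ifs <;> omega

lemma omega_sum {m : ℕ} (hm : 1 ≤ m) {k : ℕ} (hk : k ≤ m) (j : Fin (2 * m)) :
    ((omegaD m (k : ℤ) j : ℤ) : ℝ) + ((omegaD m (-(k : ℤ)) j : ℤ) : ℝ) = 2 * aD m k j := by
  have hj := j.isLt
  rw [omegaA hm hk, omegaB hm hk]
  unfold aD
  split_ifs <;> first | omega | norm_num

lemma muQ_add_rev {m q : ℕ} (hm : 1 ≤ m) (hq : q ≤ m) (j : Fin (2 * m)) :
    muQ m q j + muQ m q j.rev = 2 := by
  have hj := j.isLt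
  have hr : (j.rev : ℕ) = 2 * m - 1 - (j : ℕ) := by rw [Fin.val_rev]; omega
  simp only [muQ, hr]
  split_ifs <;> omega

lemma memA_iff {m k : ℕ} (j : Fin (2 * m)) : memA m k j ↔ ¬ memB m k j := by
  unfold memA memB; omega

lemma aD_memB {m k : ℕ} {j : Fin (2 * m)} (h : memB m k j) : aD m k j = 0 := by
  obtain ⟨h1, h2⟩ := h
  unfold aD
  rw [if_neg (by omega), if_pos h2]

lemma aD_not_memB {m k : ℕ} (hk : k ≤ m) {j : Fin (2 * m)} (h : ¬ memB m k j) :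
    aD m k j = -(1 / 2) ∨ aD m k j = 1 / 2 := by
  unfold memB at h
  push_neg at h
  unfold aD
  by_cases h1 : (j : ℕ) < k
  · left; rw [if_pos h1]
  · right; rw [if_neg h1, if_neg (by omega)]

lemma not_half (a : ℤ) (h : (a : ℝ) = 1 / 2 ∨ (a : ℝ) = -(1 / 2)) : False := by
  rcases h with h | h
  · have h2 : ((2 * a : ℤ) : ℝ) = 1 := by push_cast; linarith
    have : (2 * a : ℤ) = 1 := by exact_mod_cast h2
    omega
  · have h2 : ((2 * a : ℤ) : ℝ) = -1 := by push_cast; linarith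
    have : (2 * a : ℤ) = -1 := by exact_mod_cast h2
    omega

lemma aD_int_memB {m k : ℕ} (hk : k ≤ m) {j : Fin (2 * m)} (a : ℤ) (h : aD m k j = (a : ℝ)) :
    memB m k j := by
  by_contra hc
  rcases aD_not_memB hk hc with h1 | h1
  · exact not_half a (Or.inr (by rw [h] at h1; exact h1))
  · exact not_half a (Or.inl (by rw [h] at h1; exact h1))

lemma sum_pair_invariant {m : ℕ} (z : VecZ m) (hz : ∀ j, Even (z j + z j.rev))
    (e : Equiv.Perm (Fin (2 * m))) (he : ∀ j, e j.rev = (e j).rev) :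
    ((∑ j ∈ Finset.univ.filter (fun j : Fin (2 * m) => (j : ℕ) < m), z (e j) : ℤ) : ZMod 2)
      = ((∑ j ∈ Finset.univ.filter (fun j : Fin (2 * m) => (j : ℕ) < m), z j : ℤ) : ZMod 2) := by
  have he' := inv_rev e he
  push_cast
  set g : Fin (2 * m) → ZMod 2 := fun j => ((z j : ℤ) : ZMod 2) with hg
  have hgrev : ∀ j, g j.rev = g j := by
    intro j
    have : ((z j + z j.rev : ℤ) : ZMod 2) = 0 := by
      rw [ZMod.intCast_zmod_eq_zero_iff_dvd]
      exact_mod_cast (hz j).two_dvd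
    have h2 : g j.rev = -(g j) := by
      push_cast at this
      linear_combination this
    rw [h2, CharTwo.neg_eq]
  have hrevlt : ∀ j : Fin (2 * m), ¬ ((j : ℕ) < m) → ((j.rev : ℕ) < m) := by
    intro j h
    have := j.isLt
    rw [Fin.val_rev]; omega
  refine Finset.sum_nbij' (fun j => if ((e j : ℕ)) < m then e j else (e j).rev)
    (fun j => if ((e⁻¹ j : ℕ)) < m then e⁻¹ j else (e⁻¹ j).rev) ?_ ?_ ?_ ?_ ?_
  · intro a _
    simp only [Finset.mem_filter, Finset.mem_univ, true_and]
    split_ifs with h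
    · exact h
    · exact hrevlt _ h
  · intro a _
    simp only [Finset.mem_filter, Finset.mem_univ, true_and]
    split_ifs with h
    · exact h
    · exact hrevlt _ h
  · intro a ha
    simp only [Finset.mem_filter, Finset.mem_univ, true_and] at ha
    by_cases h : ((e a : ℕ)) < m
    · rw [if_pos h, Equiv.Perm.inv_apply_self, if_pos ha]
    · rw [if_neg h, he', Equiv.Perm.inv_apply_self,
        if_neg (by rw [Fin.val_rev]; have := a.isLt; omega), Fin.rev_rev]
  · intro a ha
    simp only [Finset.mem_filter, Finset.mem_univ, true_and] at ha
    by_cases h : ((e⁻¹ a : ℕ)) < m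
    · rw [if_pos h, Equiv.Perm.apply_inv_self, if_pos ha]
    · rw [if_neg h, he, Equiv.Perm.apply_inv_self,
        if_neg (by rw [Fin.val_rev]; have := a.isLt; omega), Fin.rev_rev]
  · intro a _
    by_cases h : ((e a : ℕ)) < m
    · rw [if_pos h]
    · rw [if_neg h]; exact (hgrev (e a)).symm

lemma qvee_transfer (m q : ℕ) (hm : 1 ≤ m) (hq : q ≤ m) (e : Equiv.Perm (Fin (2 * m)))
    (he : ∀ j, e j.rev = (e j).rev) (y : VecZ m) (hy : y ∈ QveeD m) :
    (fun j => muQ m q (e j) + y (e j) - muQ m q j) ∈ QveeD m := by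
  obtain ⟨hy1, hy2⟩ := hy
  constructor
  · intro j
    have h1 := muQ_add_rev hm hq j
    have h2 := muQ_add_rev hm hq (e j)
    have h3 := hy1 (e j)
    have h4 := he j
    simp only [h4]
    omega
  · set H := Finset.univ.filter (fun j : Fin (2 * m) => (j : ℕ) < m) with hH
    have key := sum_pair_invariant (fun j => muQ m q j + y j)
      (fun j => by
        have h1 := muQ_add_rev hm hq j
        have h2 := hy1 j
        refine ⟨1, ?_⟩
        show muQ m q j + y j + (muQ m q j.rev + y j.rev) = 1 + 1
        omega) e he
    have evenZ : ∀ n : ℤ, Even n ↔ ((n : ZMod 2) = 0) := by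
      intro n
      rw [ZMod.intCast_zmod_eq_zero_iff_dvd]
      push_cast
      exact even_iff_two_dvd
    rw [evenZ] at hy2 ⊢
    rw [Finset.sum_sub_distrib]
    push_cast at key hy2 ⊢
    rw [key, Finset.sum_add_distrib, hy2]
    ring

theorem statement18 (m q : ℕ) (hm : 2 ≤ m) (hq : q ≤ m - 1)
    (I : Finset ℕ) (hI : I.Nonempty) (hIm : ∀ a ∈ I, a ≤ m)
    (h1I : 1 ∈ I → 0 ∈ I) (h2I : m - 1 ∈ I → m ∈ I)
    (t : VecZ m) (σ : Equiv.Perm (Fin (2 * m))) (ht : InXD m t) (hσ : InSO m σ)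
    (tx : VecZ m) (σx : Equiv.Perm (Fin (2 * m))) (htx : InXD m tx) (hσx : InSO m σx)
    (hx : MemWI m I tx σx)
    (k : ℕ) (hk : k ∈ I) :
    (SP1' m t σ (k : ℤ) ↔ SP1' m (fun l => tx l + t (σx⁻¹ l)) (σx * σ) (k : ℤ)) ∧
    (SP2' m q t σ (k : ℤ) ↔ SP2' m q (fun l => tx l + t (σx⁻¹ l)) (σx * σ) (k : ℤ)) ∧
    (SP3' m q t σ k ↔ SP3' m q (fun l => tx l + t (σx⁻¹ l)) (σx * σ) k) ∧
    ((∀ k' ∈ I, SP1' m t σ (k' : ℤ) ∧ SP2' m q t σ (k' : ℤ) ∧ SP3' m q t σ k') ↔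
      (∀ k' ∈ I, SP1' m (fun l => tx l + t (σx⁻¹ l)) (σx * σ) (k' : ℤ) ∧
        SP2' m q (fun l => tx l + t (σx⁻¹ l)) (σx * σ) (k' : ℤ) ∧
        SP3' m q (fun l => tx l + t (σx⁻¹ l)) (σx * σ) k')) := by
  obtain ⟨htxQ, hfix⟩ := hx
  have hm1 : 1 ≤ m := by omega
  have hqm : q ≤ m := by omega
  have hrevx : ∀ j, σx⁻¹ j.rev = (σx⁻¹ j).rev := inv_rev σx hσx.2
  have main : ∀ k' : ℕ, k' ∈ I →
      ((SP1' m t σ (k' : ℤ) ↔ SP1' m (fun l => tx l + t (σx⁻¹ l)) (σx * σ) (k' : ℤ)) ∧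
       (SP2' m q t σ (k' : ℤ) ↔ SP2' m q (fun l => tx l + t (σx⁻¹ l)) (σx * σ) (k' : ℤ)) ∧
       (SP3' m q t σ k' ↔ SP3' m q (fun l => tx l + t (σx⁻¹ l)) (σx * σ) k')) := by
    intro k' hk'
    have hkm : k' ≤ m := hIm k' hk'
    have nuD_eq : ∀ (t0 : VecZ m) (σ0 : Equiv.Perm (Fin (2 * m))) (j : Fin (2 * m)),
        nuD m t0 σ0 (k' : ℤ) j = (t0 j : ℝ) + aD m k' (σ0⁻¹ j) - aD m k' j := by
      intro t0 σ0 j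
      have h1 := omega_sum hm1 hkm (σ0⁻¹ j)
      have h2 := omega_sum hm1 hkm j
      unfold nuD muD
      push_cast
      linarith
    have hnu : ∀ j, nuD m (fun l => tx l + t (σx⁻¹ l)) (σx * σ) (k' : ℤ) j
        = nuD m t σ (k' : ℤ) (σx⁻¹ j) := by
      intro j
      rw [nuD_eq, nuD_eq]
      have hfj := hfix k' hk' j
      have hinv : (σx * σ)⁻¹ j = σ⁻¹ (σx⁻¹ j) := by
        rw [mul_inv_rev]; rfl
      rw [hinv]
      push_cast
      linarith
    have hnu2 : ∀ j, nuD m t σ (k' : ℤ) j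
        = nuD m (fun l => tx l + t (σx⁻¹ l)) (σx * σ) (k' : ℤ) (σx j) := by
      intro j
      rw [hnu (σx j), Equiv.Perm.inv_apply_self]
    have hBi : ∀ j, memB m k' (σx⁻¹ j) ↔ memB m k' j := by
      intro j
      have hfj := hfix k' hk' j
      constructor
      · intro h
        have h0 := aD_memB h
        exact aD_int_memB hkm (tx j) (by rw [h0] at hfj; linarith)
      · intro h
        have h0 := aD_memB h
        exact aD_int_memB hkm (-tx j) (by push_cast; rw [h0] at hfj; linarith)
    have hB2 : ∀ j, memB m k' (σx j) ↔ memB m k' j := by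
      intro j
      rw [← hBi (σx j), Equiv.Perm.inv_apply_self]
    have hAi : ∀ j, memA m k' (σx⁻¹ j) ↔ memA m k' j := by
      intro j; rw [memA_iff, memA_iff, hBi]
    have hA2 : ∀ j, memA m k' (σx j) ↔ memA m k' j := by
      intro j; rw [memA_iff, memA_iff, hB2]
    have hSP1 : SP1' m t σ (k' : ℤ) ↔ SP1' m (fun l => tx l + t (σx⁻¹ l)) (σx * σ) (k' : ℤ) := by
      constructor
      · rintro ⟨h1, h2⟩
        refine ⟨fun j => ?_, fun j => ?_⟩
        · rw [hnu j, hnu j.rev, hrevx j]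
          exact h1 _
        · rw [hnu j]; exact h2 _
      · rintro ⟨h1, h2⟩
        refine ⟨fun j => ?_, fun j => ?_⟩
        · rw [hnu2 j, hnu2 j.rev, hσx.2 j]
          exact h1 _
        · rw [hnu2 j]; exact h2 _
    have hcard : ∀ P : Fin (2 * m) → Prop,
        Set.ncard {j | P (σx⁻¹ j)} = Set.ncard {j | P j} := by
      intro P
      have himg : {j | P (σx⁻¹ j)} = σx '' {j | P j} := by
        ext j
        constructor
        · intro h
          exact ⟨σx⁻¹ j, h, by simp⟩
        · rintro ⟨i, hi, rfl⟩
          simpa using hi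
      rw [himg, Set.ncard_image_of_injective _ σx.injective]
    have hSP2 : SP2' m q t σ (k' : ℤ) ↔ SP2' m q (fun l => tx l + t (σx⁻¹ l)) (σx * σ) (k' : ℤ) := by
      unfold SP2'
      have e1 : {j | nuD m (fun l => tx l + t (σx⁻¹ l)) (σx * σ) (k' : ℤ) j = 2}
          = {j | nuD m t σ (k' : ℤ) (σx⁻¹ j) = 2} := by
        ext j; simp only [Set.mem_setOf_eq, hnu]
      have e2 : {j | ¬ IsIntVal (nuD m (fun l => tx l + t (σx⁻¹ l)) (σx * σ) (k' : ℤ) j)}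
          = {j | ¬ IsIntVal (nuD m t σ (k' : ℤ) (σx⁻¹ j))} := by
        ext j; simp only [Set.mem_setOf_eq, hnu]
      rw [e1, e2, hcard (fun i => nuD m t σ (k' : ℤ) i = 2),
        hcard (fun i => ¬ IsIntVal (nuD m t σ (k' : ℤ) i))]
    have hQiff : NuCongQvee m q t σ (k' : ℤ)
        ↔ NuCongQvee m q (fun l => tx l + t (σx⁻¹ l)) (σx * σ) (k' : ℤ) := by
      constructor
      · rintro ⟨y, hyQ, hy⟩
        exact ⟨fun j => muQ m q (σx⁻¹ j) + y (σx⁻¹ j) - muQ m q j,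
          qvee_transfer m q hm1 hqm σx⁻¹ hrevx y hyQ,
          fun j => by rw [hnu j, hy (σx⁻¹ j)]; push_cast; ring⟩
      · rintro ⟨y, hyQ, hy⟩
        exact ⟨fun j => muQ m q (σx j) + y (σx j) - muQ m q j,
          qvee_transfer m q hm1 hqm σx hσx.2 y hyQ,
          fun j => by rw [hnu2 j, hy (σx j)]; push_cast; ring⟩
    have hint : (∀ j, IsIntVal (nuD m t σ (k' : ℤ) j)) ↔
        (∀ j, IsIntVal (nuD m (fun l => tx l + t (σx⁻¹ l)) (σx * σ) (k' : ℤ) j)) := by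
      constructor
      · intro h j; rw [hnu j]; exact h _
      · intro h j; rw [hnu2 j]; exact h _
    have hSP3 : SP3' m q t σ k' ↔ SP3' m q (fun l => tx l + t (σx⁻¹ l)) (σx * σ) k' := by
      constructor
      · intro h hyp
        obtain ⟨hint', hnQ'⟩ := hyp
        obtain ⟨j₁, j₂, ha, hb, h1, h2⟩ := h ⟨hint.mpr hint', fun c => hnQ' (hQiff.mp c)⟩
        exact ⟨σx j₁, σx j₂, (hA2 j₁).mpr ha, (hB2 j₂).mpr hb,
          by rw [← hnu2 j₁]; exact h1, by rw [← hnu2 j₂]; exact h2⟩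
      · intro h hyp
        obtain ⟨hintold, hnQ⟩ := hyp
        obtain ⟨j₁, j₂, ha, hb, h1, h2⟩ := h ⟨hint.mp hintold, fun c => hnQ (hQiff.mpr c)⟩
        exact ⟨σx⁻¹ j₁, σx⁻¹ j₂, (hAi j₁).mpr ha, (hBi j₂).mpr hb,
          by rw [← hnu j₁]; exact h1, by rw [← hnu j₂]; exact h2⟩
    exact ⟨hSP1, hSP2, hSP3⟩
  obtain ⟨m1, m2, m3⟩ := main k hk
  refine ⟨m1, m2, m3, ?_⟩
  constructor
  · intro h k' hk'
    obtain ⟨i1, i2, i3⟩ := main k' hk'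
    obtain ⟨a, b, c⟩ := h k' hk'
    exact ⟨i1.mp a, i2.mp b, i3.mp c⟩
  · intro h k' hk'
    obtain ⟨i1, i2, i3⟩ := main k' hk'
    obtain ⟨a, b, c⟩ := h k' hk'
    exact ⟨i1.mpr a, i2.mpr b, i3.mpr c⟩


end TypeD
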